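/- Let H be a real inner product space with inner product a(·,·). For nonempty subspaces X, Y of H, define dist_a(X,Y) = sup over unit vectors u in X of inf over v in Y of ||u−v||_a. If X is spanned by vectors x_1,…,x_d that are pairwise orthogonal with respect to a(·,·) and all nonzero, then for every nonzero x in X, dist_a(x, Y)^2 ≤ Σ_{i=1}^d dist_a(x_i, Y)^2, where dist_a of a vector to a subspace means the distance of its span to Y. -/

import Mathlib

open scoped BigOperators

variable {H : Type*}

/-- Distance from subspace `X` to subspace `Y` with respect to the norm induced by the
inner product: supremum over unit vectors of `X` of the distance to `Y`. -/
noncomputable def distSub [NormedAddCommGroup H] [InnerProductSpace ℝ H]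
    (X Y : Submodule ℝ H) : ℝ :=
  ⨆ u : {u : H // u ∈ X ∧ ‖u‖ = 1}, ⨅ v : Y, ‖u.1 - (v : H)‖

/-- Distance from a vector to a subspace: distance of its span to the subspace. -/
noncomputable def distVec [NormedAddCommGroup H] [InnerProductSpace ℝ H]
    (u : H) (Y : Submodule ℝ H) : ℝ :=
  distSub (Submodule.span ℝ {u}) Y

open Metric

section Aux
variable [NormedAddCommGroup H] [InnerProductSpace ℝ H]

theorem infDist_add_le' (Y : Submodule ℝ H) (w₁ w₂ : H) :
    infDist (w₁ + w₂) (Y : Set H) ≤ infDist w₁ Y + infDist w₂ Y := by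
  have hne : (Y : Set H).Nonempty := ⟨0, Y.zero_mem⟩
  refine le_of_forall_pos_le_add fun ε hε => ?_
  obtain ⟨v₁, hv₁, hd₁⟩ := (infDist_lt_iff hne (x := w₁)).1
    (lt_add_of_pos_right _ (by linarith : (0:ℝ) < ε/2))
  obtain ⟨v₂, hv₂, hd₂⟩ := (infDist_lt_iff hne (x := w₂)).1
    (lt_add_of_pos_right _ (by linarith : (0:ℝ) < ε/2))
  have h := infDist_le_dist_of_mem (x := w₁ + w₂) (Y.add_mem hv₁ hv₂)
  have : dist (w₁ + w₂) (v₁ + v₂) ≤ dist w₁ v₁ + dist w₂ v₂ := by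
    simp only [dist_eq_norm]
    calc ‖w₁ + w₂ - (v₁ + v₂)‖ = ‖(w₁ - v₁) + (w₂ - v₂)‖ := by
          congr 1; abel
      _ ≤ _ := norm_add_le _ _
  linarith

theorem infDist_smul_le' (Y : Submodule ℝ H) (c : ℝ) (w : H) :
    infDist (c • w) (Y : Set H) ≤ |c| * infDist w Y := by
  rcases eq_or_ne c 0 with rfl | hc
  · simp [infDist_zero_of_mem Y.zero_mem]
  have hne : (Y : Set H).Nonempty := ⟨0, Y.zero_mem⟩
  have hc' : 0 < |c| := abs_pos.2 hc
  refine le_of_forall_pos_le_add fun ε hε => ?_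
  obtain ⟨v, hv, hd⟩ := (infDist_lt_iff hne (x := w)).1 (lt_add_of_pos_right _ (div_pos hε hc'))
  have h := infDist_le_dist_of_mem (x := c • w) (Y.smul_mem c hv)
  have h2 : dist (c • w) (c • v) = |c| * dist w v := by
    simp [dist_eq_norm, ← smul_sub, norm_smul]
  have h3 : |c| * (ε / |c|) = ε := mul_div_cancel₀ _ (ne_of_gt hc')
  nlinarith

theorem infDist_neg' (Y : Submodule ℝ H) (w : H) :
    infDist (-w) (Y : Set H) = infDist w Y := by
  have key : ∀ z : H, infDist (-z) (Y : Set H) ≤ infDist z Y := fun z => by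
    have := infDist_smul_le' Y (-1) z
    simpa using this
  refine le_antisymm (key w) ?_
  simpa using key (-w)

theorem infDist_sum_le' (Y : Submodule ℝ H) {ι : Type*} (s : Finset ι) (f : ι → H) :
    infDist (∑ i ∈ s, f i) (Y : Set H) ≤ ∑ i ∈ s, infDist (f i) Y := by
  induction s using Finset.cons_induction with
  | empty => simp [infDist_zero_of_mem Y.zero_mem]
  | cons a s ha ih =>
    rw [Finset.sum_cons, Finset.sum_cons]
    exact le_trans (infDist_add_le' Y _ _) (by linarith [ih])

theorem distVec_eq_infDist (Y : Submodule ℝ H) (w : H) (hw : w ≠ 0) :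
    distVec w Y = infDist (‖w‖⁻¹ • w) (Y : Set H) := by
  unfold distVec distSub
  have hnw : ‖w‖ ≠ 0 := norm_ne_zero_iff.2 hw
  have hmem : ‖w‖⁻¹ • w ∈ Submodule.span ℝ {w} :=
    Submodule.smul_mem _ _ (Submodule.mem_span_singleton_self w)
  have hnorm : ‖‖w‖⁻¹ • w‖ = 1 := by
    rw [norm_smul, norm_inv, norm_norm, inv_mul_cancel₀ hnw]
  haveI : Nonempty {z : H // z ∈ Submodule.span ℝ {w} ∧ ‖z‖ = 1} := ⟨⟨_, hmem, hnorm⟩⟩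
  have hconst : ∀ z : {z : H // z ∈ Submodule.span ℝ {w} ∧ ‖z‖ = 1},
      (⨅ v : Y, ‖z.1 - (v : H)‖) = infDist (‖w‖⁻¹ • w) (Y : Set H) := by
    rintro ⟨z, hz, hz1⟩
    obtain ⟨c, rfl⟩ := Submodule.mem_span_singleton.1 hz
    have hinf : (⨅ v : Y, ‖c • w - (v:H)‖) = infDist (c • w) (Y : Set H) := by
      rw [infDist_eq_iInf]; simp_rw [dist_eq_norm]; rfl
    have habs : |c| = ‖w‖⁻¹ := by
      rw [norm_smul] at hz1
      field_simp
      simpa using hz1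
    rcases (abs_eq (by positivity)).1 habs with h | h
    · rw [hinf, h]
    · rw [hinf, h, neg_smul, infDist_neg']
  calc (⨆ z : {z : H // z ∈ Submodule.span ℝ {w} ∧ ‖z‖ = 1}, ⨅ v : Y, ‖z.1 - (v : H)‖)
      = ⨆ _ : {z : H // z ∈ Submodule.span ℝ {w} ∧ ‖z‖ = 1}, infDist (‖w‖⁻¹ • w) (Y : Set H) :=
        iSup_congr hconst
    _ = _ := ciSup_const

end Aux

theorem stmt0 [NormedAddCommGroup H] [InnerProductSpace ℝ H]
    (d : ℕ) (x : Fin d → H) (hx0 : ∀ i, x i ≠ 0)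
    (horth : ∀ i j, i ≠ j → (inner ℝ (x i) (x j) : ℝ) = 0)
    (X Y : Submodule ℝ H) (hX : X = Submodule.span ℝ (Set.range x))
    (u : H) (hu : u ∈ X) (hu0 : u ≠ 0) :
    distVec u Y ^ 2 ≤ ∑ i : Fin d, distVec (x i) Y ^ 2 := by
  subst hX
  obtain ⟨c, hc⟩ := (Submodule.mem_span_range_iff_exists_fun ℝ).1 hu
  have hnu : ‖u‖ ≠ 0 := norm_ne_zero_iff.2 hu0
  set D : Fin d → ℝ := fun i => infDist (‖x i‖⁻¹ • x i) (Y : Set H) with hD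
  set a : Fin d → ℝ := fun i => |c i| * ‖x i‖ / ‖u‖ with ha
  have hpyth : ‖u‖ ^ 2 = ∑ i, (c i) ^ 2 * ‖x i‖ ^ 2 := by
    rw [← hc, ← real_inner_self_eq_norm_sq, inner_sum]
    refine Finset.sum_congr rfl fun j _ => ?_
    rw [sum_inner, Finset.sum_eq_single j]
    · rw [real_inner_smul_left, real_inner_smul_right, real_inner_self_eq_norm_sq]; ring
    · intro i _ hij
      rw [real_inner_smul_left, real_inner_smul_right, horth i j hij]; ring
    · intro h; exact absurd (Finset.mem_univ j) h
  have hsum_a : ∑ i, (a i) ^ 2 = 1 := by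
    calc ∑ i, (a i) ^ 2 = (∑ i, (c i) ^ 2 * ‖x i‖ ^ 2) / ‖u‖ ^ 2 := by
          rw [Finset.sum_div]
          exact Finset.sum_congr rfl fun i _ => by
            simp only [ha]
            rw [div_pow, mul_pow, sq_abs]
      _ = 1 := by rw [← hpyth]; field_simp
  have hkey : infDist (‖u‖⁻¹ • u) (Y : Set H) ≤ ∑ i, a i * D i := by
    have hrep : ‖u‖⁻¹ • u = ∑ i, (‖u‖⁻¹ * c i) • x i := by
      rw [← hc, Finset.smul_sum]
      exact Finset.sum_congr rfl fun i _ => smul_smul _ _ _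
    rw [hrep]
    refine le_trans (infDist_sum_le' Y _ _) (Finset.sum_le_sum fun i _ => ?_)
    have h1 : (‖u‖⁻¹ * c i) • x i = (‖u‖⁻¹ * c i * ‖x i‖) • (‖x i‖⁻¹ • x i) := by
      rw [smul_smul]
      congr 1
      rw [mul_assoc, mul_inv_cancel₀ (norm_ne_zero_iff.2 (hx0 i)), mul_one]
    rw [h1]
    refine le_trans (infDist_smul_le' Y _ _) (le_of_eq ?_)
    congr 1
    rw [abs_mul, abs_mul, abs_of_nonneg (inv_nonneg.2 (norm_nonneg u)),
      abs_of_nonneg (norm_nonneg _)]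
    simp only [ha]
    rw [div_eq_mul_inv]
    ring
  have h2 : distVec u Y = infDist (‖u‖⁻¹ • u) (Y : Set H) := distVec_eq_infDist Y u hu0
  have h3 : ∀ i, distVec (x i) Y = D i := fun i => distVec_eq_infDist Y (x i) (hx0 i)
  have hCS := Finset.sum_mul_sq_le_sq_mul_sq Finset.univ a D
  have h4 : distVec u Y ≤ ∑ i, a i * D i := h2 ▸ hkey
  have h0 : 0 ≤ distVec u Y := h2 ▸ infDist_nonneg
  calc distVec u Y ^ 2 ≤ (∑ i, a i * D i) ^ 2 := pow_le_pow_left₀ h0 h4 2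
    _ ≤ (∑ i, (a i) ^ 2) * ∑ i, (D i) ^ 2 := hCS
    _ = ∑ i, (D i) ^ 2 := by rw [hsum_a, one_mul]
    _ = ∑ i : Fin d, distVec (x i) Y ^ 2 := by
        exact Finset.sum_congr rfl fun i _ => by rw [h3 i]
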